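/- Let F ⊆ k[X_0,…,X_{m−1}] be finite, k = F_{q^n}, and let k̄ be an algebraic closure of k. The map sending (a_0,…,a_{m−1}) to the point with X_i-coordinate a_i and Y_{ij}-coordinate a_i^{q^j} (for 1 ≤ j ≤ n−1) is a bijection from Z_k(F), the set of solutions of F with all coordinates in k, onto Z(F_1), the set of solutions of F_1 over k̄. -/

import Mathlib

open MvPolynomial

/-- `Z_k(F)` is in bijection with `Z(F₁)`:  the map sending `(a_0,…,a_{m-1})` to the point
with `X_i`-coordinate `a_i` and `Y_{ij}`-coordinate `a_i^{q^j}` is a bijection from the set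
of solutions of `F` with coordinates in `k = F_{q^n}` onto the set of solutions of
`F₁ = F ∪ {X_i^q - Y_{i1}, …, Y_{i,n-1}^q - X_i}` over an algebraic closure `K` of `k`.
(The variables are indexed by `Fin m × Fin n`, with `X_i = (i,0)` and `Y_{ij} = (i,j)`.) -/
theorem bijOn_solutions_F1
    {k' k K : Type} [Field k'] [Fintype k'] [Field k] [Algebra k' k]
    [Field K] [Algebra k K] [IsAlgClosed K]
    (q n m : ℕ) (hq : q = Fintype.card k') (hn : 0 < n)
    (α : Module.Basis (Fin n) k' k)
    (F : Finset (MvPolynomial (Fin m) k))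
    (F1 : Set (MvPolynomial (Fin m × Fin n) k))
    (hF1 : F1 =
      (MvPolynomial.rename fun i : Fin m => (i, (⟨0, hn⟩ : Fin n))) '' ↑F ∪
      Set.range (fun p : Fin m × Fin n =>
        X p ^ q - X (p.1, p.2 + ⟨1 % n, Nat.mod_lt 1 hn⟩))) :
    Set.BijOn
      (fun (a : Fin m → k) (p : Fin m × Fin n) =>
        algebraMap k K (a p.1 ^ q ^ (p.2 : ℕ)))
      {a : Fin m → k | ∀ f ∈ F, MvPolynomial.eval a f = 0}
      {x : Fin m × Fin n → K | ∀ f ∈ F1, MvPolynomial.aeval x f = 0} := by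
  classical
  subst hF1
  have hq1 : 1 < q := hq ▸ Fintype.one_lt_card
  haveI : Fintype k := Module.fintypeOfFintype α
  have hcardk : Fintype.card k = q ^ n := by
    rw [Module.card_fintype α, Fintype.card_fin, hq]
  have hpow : ∀ a : k, a ^ q ^ n = a := fun a => by
    rw [← hcardk]; exact FiniteField.pow_card a
  have halg : Function.Injective (algebraMap k K) := (algebraMap k K).injective
  -- the key evaluation lemma
  have key : ∀ (b : Fin m → k) (f : MvPolynomial (Fin m) k),
      aeval (fun i => algebraMap k K (b i)) f = algebraMap k K (eval b f) := by
    intro b f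
    have := MvPolynomial.comp_aeval (R := k) (f := b) (Algebra.ofId k K)
    exact (AlgHom.congr_fun this.symm f : _)
  -- Fin index arithmetic
  have hfin : ∀ j : Fin n, ((j + ⟨1 % n, Nat.mod_lt 1 hn⟩ : Fin n) : ℕ) = ((j : ℕ) + 1) % n := by
    intro j
    rw [Fin.add_def]
    conv_rhs => rw [Nat.add_mod, Nat.mod_eq_of_lt j.isLt]
  -- Frobenius step on powers in k
  have hstep : ∀ (a : k) (j : Fin n),
      (a ^ q ^ (j : ℕ)) ^ q = a ^ q ^ (((j : ℕ) + 1) % n) := by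
    intro a j
    rw [← pow_mul, ← pow_succ]
    rcases eq_or_lt_of_le (Nat.succ_le_of_lt j.isLt) with h | h
    · have h' : (j : ℕ) + 1 = n := h
      rw [h', Nat.mod_self, pow_zero, pow_one, hpow]
    · rw [Nat.mod_eq_of_lt h]
  -- characterization of the image of k in K
  have hmem : ∀ b : K, b ^ q ^ n = b → ∃ a : k, algebraMap k K a = b := by
    intro b hb
    have hpne : (Polynomial.X ^ q ^ n - Polynomial.X : Polynomial K) ≠ 0 :=
      FiniteField.X_pow_card_pow_sub_X_ne_zero K hn.ne' hq1
    set S : Finset K := Finset.univ.image (algebraMap k K) with hSdef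
    have hS : S.val ≤ (Polynomial.X ^ q ^ n - Polynomial.X : Polynomial K).roots := by
      rw [Multiset.le_iff_subset S.nodup]
      intro y hy
      rw [Polynomial.mem_roots hpne]
      obtain ⟨a, -, rfl⟩ := Finset.mem_image.mp hy
      simp [Polynomial.IsRoot, sub_eq_zero, ← map_pow, hpow a]
    have hcardS : S.card = q ^ n := by
      rw [hSdef, Finset.card_image_of_injective _ halg, Finset.card_univ, hcardk]
    have hroots : (Polynomial.X ^ q ^ n - Polynomial.X : Polynomial K).roots = S.val := by
      refine (Multiset.eq_of_le_of_card_le hS ?_).symm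
      calc (Polynomial.X ^ q ^ n - Polynomial.X : Polynomial K).roots.card
          ≤ (Polynomial.X ^ q ^ n - Polynomial.X : Polynomial K).natDegree :=
            Polynomial.card_roots' _
        _ = q ^ n := FiniteField.X_pow_card_pow_sub_X_natDegree_eq K hn.ne' hq1
        _ = Multiset.card S.val := hcardS.symm
    have hb' : b ∈ S := by
      rw [← Finset.mem_val, ← hroots, Polynomial.mem_roots hpne]
      simp [Polynomial.IsRoot, sub_eq_zero, hb]
    obtain ⟨a, -, ha⟩ := Finset.mem_image.mp hb'
    exact ⟨a, ha⟩
  refine ⟨?_, ?_, ?_⟩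
  · -- MapsTo
    intro a ha f hf
    rcases hf with ⟨g, hg, rfl⟩ | ⟨r, rfl⟩
    · show aeval (fun p : Fin m × Fin n => algebraMap k K (a p.1 ^ q ^ (p.2 : ℕ)))
        ((rename fun i : Fin m => (i, (⟨0, hn⟩ : Fin n))) g) = 0
      rw [aeval_rename]
      have hc : ((fun p : Fin m × Fin n => algebraMap k K (a p.1 ^ q ^ (p.2 : ℕ))) ∘
          (fun i : Fin m => (i, (⟨0, hn⟩ : Fin n)))) = fun i => algebraMap k K (a i) := by
        funext i; simp
      rw [hc, key, ha g hg, map_zero]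
    · show aeval (fun p : Fin m × Fin n => algebraMap k K (a p.1 ^ q ^ (p.2 : ℕ)))
        (X r ^ q - X (r.1, r.2 + ⟨1 % n, Nat.mod_lt 1 hn⟩)) = 0
      rw [map_sub, map_pow, aeval_X, aeval_X, ← map_pow, hstep, hfin, sub_self]
  · -- InjOn
    intro a _ a' _ h
    funext i
    have h0 := congrFun h (i, (⟨0, hn⟩ : Fin n))
    simp only [Fin.val_mk, pow_zero, pow_one] at h0
    exact halg h0
  · -- SurjOn
    intro x hx
    have hrel : ∀ r : Fin m × Fin n,
        x r ^ q = x (r.1, r.2 + ⟨1 % n, Nat.mod_lt 1 hn⟩) := by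
      intro r
      have := hx _ (Set.mem_union_right _ ⟨r, rfl⟩)
      simpa [sub_eq_zero] using this
    have hxj : ∀ (i : Fin m) (j : ℕ) (hj : j < n),
        x (i, ⟨j, hj⟩) = x (i, ⟨0, hn⟩) ^ q ^ j := by
      intro i j
      induction j with
      | zero => intro hj; simp
      | succ j ih =>
        intro hj
        have hj' : j < n := Nat.lt_of_succ_lt hj
        have h1 := hrel (i, ⟨j, hj'⟩)
        have h2 : ((⟨j, hj'⟩ : Fin n) + ⟨1 % n, Nat.mod_lt 1 hn⟩) = (⟨j + 1, hj⟩ : Fin n) := by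
          apply Fin.ext
          rw [hfin]
          exact Nat.mod_eq_of_lt hj
        rw [h2] at h1
        rw [← h1, ih hj', ← pow_mul, ← pow_succ]
    have hfix : ∀ i : Fin m, x (i, ⟨0, hn⟩) ^ q ^ n = x (i, ⟨0, hn⟩) := by
      intro i
      have h1 := hrel (i, ⟨n - 1, Nat.sub_lt hn one_pos⟩)
      have h2 : ((⟨n - 1, Nat.sub_lt hn one_pos⟩ : Fin n) + ⟨1 % n, Nat.mod_lt 1 hn⟩)
          = (⟨0, hn⟩ : Fin n) := by
        apply Fin.ext
        rw [hfin]
        show (n - 1 + 1) % n = 0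
        rw [Nat.sub_add_cancel hn, Nat.mod_self]
      rw [h2, hxj i (n - 1) (Nat.sub_lt hn one_pos)] at h1
      calc x (i, ⟨0, hn⟩) ^ q ^ n = (x (i, ⟨0, hn⟩) ^ q ^ (n - 1)) ^ q := by
            rw [← pow_mul, ← pow_succ, Nat.sub_add_cancel hn]
        _ = x (i, ⟨0, hn⟩) := h1
    choose a ha using fun i => hmem _ (hfix i)
    have hxeq : (fun p : Fin m × Fin n => algebraMap k K (a p.1 ^ q ^ (p.2 : ℕ))) = x := by
      funext p
      rcases p with ⟨i, j⟩
      have := hxj i (j : ℕ) j.isLt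
      simp only [Fin.eta] at this
      rw [this, ← ha i, map_pow]
    refine ⟨a, ?_, hxeq⟩
    intro f hf
    have h0 := hx _ (Set.mem_union_left _ ⟨f, hf, rfl⟩)
    rw [aeval_rename] at h0
    have hc : (x ∘ (fun i : Fin m => (i, (⟨0, hn⟩ : Fin n)))) = fun i => algebraMap k K (a i) := by
      funext i; simp [ha i]
    rw [hc, key] at h0
    apply halg
    rw [h0, map_zero]
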